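/- Let B, C be symmetric positive definite matrices with ρ(kC) < 1. Then the scheme (Ũ^{n+1} − Uⁿ)/k = −BŨ^{n+1} − CUⁿ followed by normalization U^{n+1} = Ũ^{n+1}/‖Ũ^{n+1}‖ is energy diminishing for E(U) = UᵀAU with A = (I − kC)^{-1}(B + C), provided B and C commute (so that A is symmetric positive definite): E(U^{n+1}) ≤ E(Uⁿ). -/

import Mathlib

open Matrix Pointwise

noncomputable section

private lemma dotSelfNonneg {n : ℕ} (v : Fin n → ℝ) : 0 ≤ v ⬝ᵥ v :=
  Finset.sum_nonneg fun i _ => mul_self_nonneg (v i)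

private lemma dotSelfPos {n : ℕ} {v : Fin n → ℝ} (hv : v ≠ 0) : 0 < v ⬝ᵥ v :=
  lt_of_le_of_ne (dotSelfNonneg v) (fun h => hv (dotProduct_self_eq_zero.mp h.symm))

private lemma csDot {n : ℕ} (v w : Fin n → ℝ) :
    (v ⬝ᵥ w) ^ 2 ≤ (v ⬝ᵥ v) * (w ⬝ᵥ w) := by
  have := Finset.sum_mul_sq_le_sq_mul_sq Finset.univ v w
  simpa [dotProduct, sq] using this

private lemma specNonneg {n : ℕ} {M : Matrix (Fin n) (Fin n) ℝ} (hM : M.PosSemidef) :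
    ∀ μ ∈ spectrum ℝ M, 0 ≤ μ := by
  intro μ hμ
  have h1 : spectrum ℝ (Matrix.toLinAlgEquiv' M) = spectrum ℝ M :=
    AlgEquiv.spectrum_eq _ _
  rw [← h1] at hμ
  have h2 : Module.End.HasEigenvalue (Matrix.toLinAlgEquiv' M) μ :=
    Module.End.hasEigenvalue_iff_mem_spectrum.mpr hμ
  obtain ⟨v, hv⟩ := h2.exists_hasEigenvector
  have hveq : M *ᵥ v = μ • v := by
    have h := hv.apply_eq_smul
    rwa [Matrix.toLinAlgEquiv'_apply] at h
  have hpos : 0 < v ⬝ᵥ v := dotSelfPos hv.right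
  have hnn : 0 ≤ v ⬝ᵥ (M *ᵥ v) := by
    have := hM.dotProduct_mulVec_nonneg v
    simpa using this
  rw [hveq] at hnn
  have : 0 ≤ μ * (v ⬝ᵥ v) := by simpa [dotProduct_smul] using hnn
  nlinarith

theorem stmt12 {n : ℕ} (B C : Matrix (Fin n) (Fin n) ℝ)
    (hB : B.PosDef) (hC : C.PosDef) (hcomm : B * C = C * B)
    (k : ℝ) (hk : 0 < k) (hρ : ∀ μ ∈ spectrum ℝ (k • C), |μ| < 1)
    (U : ℕ → Fin n → ℝ) (hU0 : U 0 ⬝ᵥ U 0 = 1)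
    (Ut : ℕ → Fin n → ℝ)
    (hscheme : ∀ m : ℕ,
      (fun i => (Ut m i - U m i) / k) =
        (fun i => -(B *ᵥ Ut m) i - (C *ᵥ U m) i))
    (hstep : ∀ m : ℕ,
      U (m + 1) = (Real.sqrt (Ut m ⬝ᵥ Ut m))⁻¹ • Ut m) :
    ∀ m : ℕ,
      U (m + 1) ⬝ᵥ ((((1 : Matrix (Fin n) (Fin n) ℝ) - k • C)⁻¹ * (B + C)) *ᵥ U (m + 1)) ≤
        U m ⬝ᵥ ((((1 : Matrix (Fin n) (Fin n) ℝ) - k • C)⁻¹ * (B + C)) *ᵥ U m) := by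
  classical
  set S : Matrix (Fin n) (Fin n) ℝ := 1 - k • C with hS
  set T : Matrix (Fin n) (Fin n) ℝ := B + C with hT
  set A : Matrix (Fin n) (Fin n) ℝ := S⁻¹ * T with hA
  have hCH : C.IsHermitian := hC.1
  have hBH : B.IsHermitian := hB.1
  have hkCH : (k • C).IsHermitian := by
    show (k • C)ᴴ = k • C
    rw [conjTranspose_smul, star_trivial, hCH.eq]
  have hSH : S.IsHermitian := isHermitian_one.sub hkCH
  have hTH : T.IsHermitian := hBH.add hCH
  -- S is invertible
  have hSunit : IsUnit S := by
    by_contra h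
    have h1 : (1 : ℝ) ∈ spectrum ℝ (k • C) := by
      rw [spectrum.mem_iff,
        show (algebraMap ℝ (Matrix (Fin n) (Fin n) ℝ)) 1 = 1 from _root_.map_one _, ← hS]
      exact h
    simpa using hρ 1 h1
  have hSdetu : IsUnit S.det := (isUnit_iff_isUnit_det S).mp hSunit
  -- spectrum of S is positive
  have hspecS : ∀ μ ∈ spectrum ℝ S, 0 < μ := by
    intro μ hμ
    have h1 : spectrum ℝ S = ({(1 : ℝ)} : Set ℝ) - spectrum ℝ (k • C) := by
      rw [spectrum.singleton_sub_eq,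
        show (algebraMap ℝ (Matrix (Fin n) (Fin n) ℝ)) 1 = 1 from _root_.map_one _, ← hS]
    rw [h1, Set.mem_sub] at hμ
    obtain ⟨x, hx, y, hy, hxy⟩ := hμ
    rw [Set.mem_singleton_iff] at hx
    have h2 := abs_lt.mp (hρ y hy)
    subst hx
    nlinarith
  have hSpsd : S.PosSemidef :=
    hSH.posSemidef_iff_eigenvalues_nonneg.mpr fun i =>
      (hspecS _ (hSH.eigenvalues_mem_spectrum_real i)).le
  have hSpd : S.PosDef := by
    refine ⟨hSH, fun x hx => ?_⟩
    rcases (hSpsd.2 x).lt_or_eq with h | h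
    · simpa using h
    · exfalso
      have h0 : S *ᵥ x = 0 := (hSpsd.dotProduct_mulVec_zero_iff x).mp (by
        simpa [Finsupp.sum_fintype, dotProduct, mulVec, Finset.mul_sum, mul_assoc] using h.symm)
      apply hx
      have h1 := congrArg (fun v => S⁻¹ *ᵥ v) h0
      simpa [mulVec_mulVec, nonsing_inv_mul _ hSdetu] using h1
  -- commutation
  have hcST : S * T = T * S := by
    simp only [hS, hT, sub_mul, mul_sub, one_mul, mul_one, Matrix.smul_mul, Matrix.mul_smul,
      mul_add, add_mul, hcomm]
    module
  have hcSinvT : S⁻¹ * T = T * S⁻¹ := by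
    have e1 : S⁻¹ * (S * T) * S⁻¹ = T * S⁻¹ := by
      rw [← mul_assoc, nonsing_inv_mul _ hSdetu, one_mul]
    have e2 : S⁻¹ * (T * S) * S⁻¹ = S⁻¹ * T := by
      rw [mul_assoc, mul_assoc, mul_nonsing_inv _ hSdetu, mul_one]
    rw [← e2, ← hcST, e1]
  have hAH : A.IsHermitian := by
    show Aᴴ = A
    rw [hA, conjTranspose_mul, hTH.eq, conjTranspose_nonsing_inv, hSH.eq, hcSinvT]
  -- A is positive semidefinite
  have hTpsd : T.PosSemidef := (hB.add hC).posSemidef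
  obtain ⟨R, hRH', hRR⟩ : ∃ R : Matrix (Fin n) (Fin n) ℝ, R.IsHermitian ∧ R * R = T := by
    open scoped MatrixOrder in
    exact ⟨CFC.sqrt T, (CFC.sqrt_nonneg T).posSemidef.1, CFC.sqrt_mul_sqrt_self T hTpsd.nonneg⟩
  have hRH : R.IsHermitian := hRH'
  have hA_eq : A = (S⁻¹ * R) * R := by rw [hA, mul_assoc, hRR]
  have hRSR : (R * (S⁻¹ * R)).PosSemidef := by
    have h := (hSpd.inv.posSemidef).mul_mul_conjTranspose_same R
    rwa [hRH.eq, mul_assoc] at h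
  have hApsd : A.PosSemidef := by
    refine hAH.posSemidef_iff_eigenvalues_nonneg.mpr fun i => ?_
    have hmem := hAH.eigenvalues_mem_spectrum_real i
    rcases eq_or_ne (hAH.eigenvalues i) 0 with h | h
    · rw [h]; exact le_rfl
    · have hmem' : hAH.eigenvalues i ∈ spectrum ℝ ((S⁻¹ * R) * R) \ {0} := by
        rw [← hA_eq]; exact ⟨hmem, h⟩
      rw [spectrum.nonzero_mul_comm] at hmem'
      exact specNonneg hRSR _ hmem'.1
  -- the scheme relation
  have hrel : ∀ m, (1 + k • B) *ᵥ Ut m = S *ᵥ U m := by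
    intro m
    funext i
    have h := congrFun (hscheme m) i
    have h2 : Ut m i - U m i = (-(B *ᵥ Ut m) i - (C *ᵥ U m) i) * k :=
      (div_eq_iff hk.ne').mp h
    simp only [hS, add_mulVec, sub_mulVec, one_mulVec, smul_mulVec, Pi.add_apply,
      Pi.sub_apply, Pi.smul_apply, smul_eq_mul]
    linarith
  -- the key matrix identity
  have hSA : S * (1 + k • A) = 1 + k • B := by
    rw [mul_add, mul_one, hA, Matrix.mul_smul, ← mul_assoc, mul_nonsing_inv _ hSdetu, one_mul]
    rw [hS, hT]
    simp only [smul_add]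
    module
  have hU_eq : ∀ m, U m = (1 + k • A) *ᵥ Ut m := by
    intro m
    have h1 : S *ᵥ ((1 + k • A) *ᵥ Ut m) = S *ᵥ U m := by
      rw [mulVec_mulVec, hSA, hrel m]
    have h2 := congrArg (fun v => S⁻¹ *ᵥ v) h1
    simpa [mulVec_mulVec, ← mul_assoc, nonsing_inv_mul _ hSdetu] using h2.symm
  -- norms stay one
  have hnorm : ∀ m, U m ⬝ᵥ U m = 1 := by
    intro m
    induction m with
    | zero => exact hU0
    | succ j ih =>
      have hUtne : Ut j ≠ 0 := by
        intro h0
        have hUj : U j = 0 := by rw [hU_eq j, h0, mulVec_zero]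
        rw [hUj] at ih
        simp at ih
      have ht : 0 < Ut j ⬝ᵥ Ut j := dotSelfPos hUtne
      rw [hstep j]
      simp only [smul_dotProduct, dotProduct_smul, smul_eq_mul]
      rw [← mul_assoc, ← mul_inv, Real.mul_self_sqrt ht.le, inv_mul_cancel₀ ht.ne']
  -- symmetry of A as a bilinear form
  have hAT : Aᵀ = A := by
    rw [← conjTranspose_eq_transpose_of_trivial, hAH.eq]
  have hsymA : ∀ x y : Fin n → ℝ, x ⬝ᵥ (A *ᵥ y) = (A *ᵥ x) ⬝ᵥ y := by
    intro x y
    rw [dotProduct_mulVec, ← mulVec_transpose, hAT]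
  obtain ⟨W, hW⟩ : ∃ W : Matrix (Fin n) (Fin n) ℝ, A = Wᴴ * W := by
    open scoped MatrixOrder in
    obtain ⟨W, hW⟩ := CStarAlgebra.nonneg_iff_eq_star_mul_self.mp hApsd.nonneg
    exact ⟨W, by rw [hW, star_eq_conjTranspose]⟩
  have hinner : ∀ x y : Fin n → ℝ, x ⬝ᵥ (A *ᵥ y) = (W *ᵥ x) ⬝ᵥ (W *ᵥ y) := by
    intro x y
    rw [hW, ← mulVec_mulVec, dotProduct_mulVec, vecMul_conjTranspose]
    simp
  -- main step
  intro m
  have hUtne : Ut m ≠ 0 := by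
    intro h0
    have hUj : U m = 0 := by rw [hU_eq m, h0, mulVec_zero]
    have := hnorm m
    rw [hUj] at this
    simp at this
  set V : Fin n → ℝ := Ut m with hV
  set w : Fin n → ℝ := A *ᵥ V with hw
  set a : ℝ := V ⬝ᵥ w with ha
  set b : ℝ := w ⬝ᵥ w with hb
  set c : ℝ := V ⬝ᵥ V with hc
  set d : ℝ := w ⬝ᵥ (A *ᵥ w) with hd
  have hc0 : 0 < c := dotSelfPos hUtne
  have ha0 : 0 ≤ a := by rw [ha, hw, hinner]; exact dotSelfNonneg _
  have hb0 : 0 ≤ b := dotSelfNonneg w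
  have hd0 : 0 ≤ d := by rw [hd, hinner]; exact dotSelfNonneg _
  have hCS1 : a ^ 2 ≤ c * b := by rw [ha, hb, hc]; exact csDot V w
  have hCS2 : b ^ 2 ≤ a * d := by
    have hb' : b = (W *ᵥ V) ⬝ᵥ (W *ᵥ w) := by
      rw [hb, hw]
      rw [show (A *ᵥ V) ⬝ᵥ (A *ᵥ V) = V ⬝ᵥ (A *ᵥ (A *ᵥ V)) from (hsymA V (A *ᵥ V)).symm]
      rw [hinner]
    have ha' : a = (W *ᵥ V) ⬝ᵥ (W *ᵥ V) := by rw [ha, hw, hinner]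
    have hd' : d = (W *ᵥ w) ⬝ᵥ (W *ᵥ w) := by rw [hd, hinner]
    rw [hb', ha', hd']
    exact csDot _ _
  have hab : a * b ≤ c * d := by
    have hmul : (a * b) ^ 2 ≤ (c * d) * (a * b) := by
      have := mul_le_mul hCS1 hCS2 (sq_nonneg b) (by positivity)
      nlinarith
    rcases (mul_nonneg ha0 hb0).eq_or_lt with h | h
    · rw [← h]; positivity
    · exact le_of_mul_le_mul_right (by nlinarith) h
  -- expansions
  have hu' : U m = V + k • w := by
    rw [hU_eq m, add_mulVec, one_mulVec, smul_mulVec, hV, hw]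
  have hexp1 : c + 2 * k * a + k ^ 2 * b = 1 := by
    have h := hnorm m
    rw [hu'] at h
    simp only [dotProduct_add, add_dotProduct, dotProduct_smul, smul_dotProduct,
      smul_eq_mul] at h
    rw [dotProduct_comm w V] at h
    rw [← ha, ← hb, ← hc] at h
    nlinarith [h]
  have hR : U m ⬝ᵥ (A *ᵥ U m) = a + 2 * k * b + k ^ 2 * d := by
    have hAu : A *ᵥ U m = w + k • (A *ᵥ w) := by
      rw [hu', mulVec_add, mulVec_smul, hw]
    rw [hu']
    simp only [mulVec_add, mulVec_smul, dotProduct_add, add_dotProduct, dotProduct_smul,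
      smul_dotProduct, smul_eq_mul, ← hw]
    have e1 : V ⬝ᵥ (A *ᵥ w) = b := by rw [hsymA, ← hw, ← hb]
    have e2 : w ⬝ᵥ w = b := hb.symm
    have e3 : V ⬝ᵥ w = a := ha.symm
    have e4 : w ⬝ᵥ (A *ᵥ w) = d := hd.symm
    rw [e1, e2, e3, e4]
    ring
  have hL : U (m + 1) ⬝ᵥ (A *ᵥ U (m + 1)) = c⁻¹ * a := by
    rw [hstep m]
    simp only [smul_dotProduct, mulVec_smul, dotProduct_smul, smul_eq_mul]
    rw [← hV, ← hw, ← ha, ← mul_assoc, ← mul_inv]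
    rw [show Real.sqrt (Ut m ⬝ᵥ Ut m) * Real.sqrt (Ut m ⬝ᵥ Ut m) = c by
      rw [Real.mul_self_sqrt (dotSelfNonneg _)]]
  rw [hL, hR]
  rw [inv_mul_le_iff₀ hc0]
  nlinarith [mul_nonneg (by linarith : (0:ℝ) ≤ 2 * k) (sub_nonneg.mpr hCS1),
    mul_nonneg (sq_nonneg k) (sub_nonneg.mpr hab), hexp1]
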